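/- Let T satisfy the sectorial-type hypotheses (ray S_ω in the S-resolvent set with ‖Q_s(T)^{-1}‖ ≤ M/|s|², ‖TQ_s(T)^{-1}‖ ≤ M/|s|). Then for all n < k < m ∈ ℕ₀, the space D(Tᵏ) belongs to the class J_{(k−n)/(m−n)}(D(Tⁿ), D(T^m)); i.e., there exists C_J ≥ 0 with ‖x‖_{D(Tᵏ)} ≤ C_J·‖x‖_{D(Tⁿ)}^{(m−k)/(m−n)}·‖x‖_{D(T^m)}^{(k−n)/(m−n)} for all x ∈ D(T^m). -/

import Mathlib

noncomputable section

open MulOpposite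

local notation "ℍ" => Quaternion ℝ

/-- The domain `D(Tⁿ)` of the `n`-th power of an operator `T` with domain `D`:
all `x` such that `x, Tx, …, T^{n-1}x ∈ D`. -/
def domN {X : Type*} [AddCommGroup X] [Module ℍᵐᵒᵖ X]
    (T : Module.End ℍᵐᵒᵖ X) (D : Set X) (n : ℕ) : Set X :=
  {x | ∀ j < n, (T ^ j) x ∈ D}

/-- The operator `Q_s(T) = T² − 2 Re(s) T + |s|²` for a quaternion `s`. -/
def Qs {X : Type*} [AddCommGroup X] [Module ℍᵐᵒᵖ X] [Module ℝ X]
    [SMulCommClass ℍᵐᵒᵖ ℝ X] (T : Module.End ℍᵐᵒᵖ X) (s : ℍ) : Module.End ℍᵐᵒᵖ X :=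
  T ^ 2 - (2 * s.re) • T + (‖s‖ ^ 2) • 1

/-- The operator `Q_{t e^{iω}}(T) = T² − 2 t cos(ω) T + t²` associated with the point
`t e^{iω}` of the ray `S_ω` (independent of the imaginary unit `i ∈ 𝕊`). -/
def Qray {X : Type*} [AddCommGroup X] [Module ℍᵐᵒᵖ X] [Module ℝ X]
    [SMulCommClass ℍᵐᵒᵖ ℝ X] (T : Module.End ℍᵐᵒᵖ X) (ω t : ℝ) : Module.End ℍᵐᵒᵖ X :=
  T ^ 2 - (2 * t * Real.cos ω) • T + (t ^ 2) • 1

/-- Discrete convexity: if `c (j+1) ≤ (c j + c (j+2))/2` then `c` lies below its chords. -/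
theorem aux_seq_convex (N : ℕ) (c : ℕ → ℝ)
    (h : ∀ j, j + 2 ≤ N → c (j + 1) ≤ (c j + c (j + 2)) / 2) :
    ∀ i ≤ N, (N : ℝ) * c i ≤ ((N : ℝ) - i) * c 0 + (i : ℝ) * c N := by
  set d : ℕ → ℝ := fun j => c (j + 1) - c j with hd
  have hmono : ∀ a b : ℕ, a ≤ b → b + 1 ≤ N → d a ≤ d b := by
    intro a b hab
    induction b, hab using Nat.le_induction with
    | base => intro _; exact le_rfl
    | succ b hab ih =>
      intro hbN
      have h1 : d b ≤ d (b + 1) := by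
        have := h b (by omega)
        simp only [hd]
        linarith
      exact (ih (by omega)).trans h1
  intro i hiN
  rcases Nat.eq_zero_or_pos i with rfl | hi0
  · simp
  rcases eq_or_lt_of_le hiN with rfl | hiltN
  · simp
  have hsum1 : c i - c 0 = ∑ j ∈ Finset.range i, d j := (Finset.sum_range_sub c i).symm
  have hsum2 : c N - c i = ∑ j ∈ Finset.Ico i N, d j := by
    rw [Finset.sum_Ico_eq_sub _ hiN, Finset.sum_range_sub c, Finset.sum_range_sub c]
    ring
  have hub : c i - c 0 ≤ (i : ℝ) * d (i - 1) := by
    rw [hsum1]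
    calc ∑ j ∈ Finset.range i, d j ≤ (Finset.range i).card • d (i - 1) := by
          apply Finset.sum_le_card_nsmul
          intro j hj
          rw [Finset.mem_range] at hj
          exact hmono j (i - 1) (by omega) (by omega)
      _ = (i : ℝ) * d (i - 1) := by simp [nsmul_eq_mul]
  have hlb : ((N : ℝ) - i) * d (i - 1) ≤ c N - c i := by
    rw [hsum2]
    calc ((N : ℝ) - i) * d (i - 1) = (Finset.Ico i N).card • d (i - 1) := by
          rw [Nat.card_Ico, nsmul_eq_mul, Nat.cast_sub hiN]
      _ ≤ ∑ j ∈ Finset.Ico i N, d j := by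
          apply Finset.card_nsmul_le_sum
          intro j hj
          rw [Finset.mem_Ico] at hj
          exact hmono (i - 1) j (by omega) (by omega)
  have hNi : (0:ℝ) ≤ (N : ℝ) - i := by
    have : (i:ℝ) ≤ N := by exact_mod_cast hiN
    linarith
  have h1 : ((N:ℝ) - i) * (c i - c 0) ≤ ((N:ℝ) - i) * ((i:ℝ) * d (i-1)) :=
    mul_le_mul_of_nonneg_left hub hNi
  have h2 : (i:ℝ) * (((N:ℝ) - i) * d (i-1)) ≤ (i:ℝ) * (c N - c i) :=
    mul_le_mul_of_nonneg_left hlb (by positivity)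
  nlinarith [h1, h2]

/-- Multiplicative interpolation along a sequence with `b (j+1) ≤ K √(b j · b (j+2))`. -/
theorem aux_interp (K : ℝ) (hK : 1 ≤ K) (N : ℕ) (hN : 0 < N) (b : ℕ → ℝ)
    (hb : ∀ j, 0 < b j)
    (h : ∀ j, j + 2 ≤ N → b (j + 1) ≤ K * Real.sqrt (b j * b (j + 2))) :
    ∀ i ≤ N, b i ≤ K ^ (N * N) * b 0 ^ (((N : ℝ) - i) / N) * b N ^ ((i : ℝ) / N) := by
  have hK0 : (0:ℝ) < K := lt_of_lt_of_le one_pos hK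
  set L : ℝ := Real.log K with hL
  have hL0 : 0 ≤ L := Real.log_nonneg hK
  set c : ℕ → ℝ := fun j => Real.log (b j) - L * j * ((N : ℝ) - j) with hc
  have hconv : ∀ j, j + 2 ≤ N → c (j + 1) ≤ (c j + c (j + 2)) / 2 := by
    intro j hj
    have hlog : Real.log (b (j + 1)) ≤ L + (Real.log (b j) + Real.log (b (j + 2))) / 2 := by
      have h1 : Real.log (b (j+1)) ≤ Real.log (K * Real.sqrt (b j * b (j + 2))) :=
        Real.log_le_log (hb _) (h j hj)
      rw [Real.log_mul (ne_of_gt hK0) (Real.sqrt_pos.mpr (mul_pos (hb _) (hb _))).ne',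
        Real.log_sqrt (mul_pos (hb _) (hb _)).le,
        Real.log_mul (ne_of_gt (hb _)) (ne_of_gt (hb _))] at h1
      linarith
    have hquad : L * (j + 1 : ℕ) * ((N : ℝ) - (j + 1 : ℕ))
        = (L * j * ((N : ℝ) - j) + L * (j + 2 : ℕ) * ((N : ℝ) - (j + 2 : ℕ))) / 2 + L := by
      push_cast
      ring
    simp only [hc]
    rw [hquad]
    linarith
  intro i hiN
  have hkey := aux_seq_convex N c hconv i hiN
  have hc0 : c 0 = Real.log (b 0) := by simp [hc]
  have hcN : c N = Real.log (b N) := by simp [hc]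
  rw [hc0, hcN] at hkey
  simp only [hc] at hkey
  have hNR : (0:ℝ) < (N : ℝ) := by exact_mod_cast hN
  have hiR : (0:ℝ) ≤ (i : ℝ) := Nat.cast_nonneg i
  have hNiR : (0:ℝ) ≤ (N : ℝ) - i := by
    have : (i:ℝ) ≤ N := by exact_mod_cast hiN
    linarith
  have hlogbound : Real.log (b i)
      ≤ L * i * ((N:ℝ) - i) + (((N:ℝ) - i) / N) * Real.log (b 0)
        + ((i : ℝ) / N) * Real.log (b N) := by
    have h4 : Real.log (b i) ≤ (L * i * ((N:ℝ) - i) * N + ((N:ℝ) - i) * Real.log (b 0)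
        + (i:ℝ) * Real.log (b N)) / N := by
      rw [le_div_iff₀ hNR]; nlinarith [hkey]
    have h5 : (L * i * ((N:ℝ) - i) * N + ((N:ℝ) - i) * Real.log (b 0)
        + (i:ℝ) * Real.log (b N)) / N
        = L * i * ((N:ℝ) - i) + (((N:ℝ) - i) / N) * Real.log (b 0)
          + ((i : ℝ) / N) * Real.log (b N) := by
      field_simp
    rw [h5] at h4; exact h4
  have hexp := Real.exp_le_exp.mpr hlogbound
  rw [Real.exp_log (hb i)] at hexp
  refine hexp.trans ?_
  rw [Real.exp_add, Real.exp_add]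
  have e1 : Real.exp (L * i * ((N:ℝ) - i)) ≤ K ^ (N * N) := by
    have hle : L * i * ((N:ℝ) - i) ≤ L * (N * N : ℕ) := by
      have h1 : (i:ℝ) * ((N:ℝ) - i) ≤ (N:ℝ) * (N:ℝ) := by
        have : (i:ℝ) ≤ N := by exact_mod_cast hiN
        nlinarith
      push_cast
      nlinarith
    calc Real.exp (L * i * ((N:ℝ) - i)) ≤ Real.exp (L * (N * N : ℕ)) := Real.exp_le_exp.mpr hle
      _ = K ^ (N * N) := by
        rw [mul_comm, Real.exp_nat_mul, Real.exp_log hK0]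
  have e2 : Real.exp ((((N:ℝ) - i) / N) * Real.log (b 0)) = b 0 ^ (((N:ℝ) - i) / N) := by
    rw [Real.rpow_def_of_pos (hb 0), mul_comm]
  have e3 : Real.exp (((i:ℝ) / N) * Real.log (b N)) = b N ^ ((i:ℝ) / N) := by
    rw [Real.rpow_def_of_pos (hb N), mul_comm]
  rw [e2, e3]
  have hpos2 : (0:ℝ) ≤ b 0 ^ (((N:ℝ) - i) / N) := Real.rpow_nonneg (hb 0).le _
  have hpos3 : (0:ℝ) ≤ b N ^ ((i:ℝ) / N) := Real.rpow_nonneg (hb N).le _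
  have := mul_le_mul_of_nonneg_right e1 hpos2
  exact mul_le_mul_of_nonneg_right this hpos3

lemma domN_two_iff {X : Type*} [AddCommGroup X] [Module ℍᵐᵒᵖ X]
    (T : Module.End ℍᵐᵒᵖ X) (D : Set X) (v : X) :
    v ∈ domN T D 2 ↔ v ∈ D ∧ T v ∈ D := by
  constructor
  · intro h
    exact ⟨by simpa using h 0 (by norm_num), by simpa using h 1 (by norm_num)⟩
  · rintro ⟨h0, h1⟩ j hj
    interval_cases j
    · simpa using h0
    · simpa using h1

/-- `D(Tᵏ) ∈ J_{(k−n)/(m−n)}(D(Tⁿ), D(T^m))`, i.e. the graph norms satisfy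
`‖x‖_{D(Tᵏ)} ≤ C ‖x‖_{D(Tⁿ)}^{(m−k)/(m−n)} ‖x‖_{D(T^m)}^{(k−n)/(m−n)}` on `D(T^m)`. -/
theorem dom_pow_J_intermediate
    {X : Type*} [NormedAddCommGroup X] [NormedSpace ℝ X] [CompleteSpace X]
    [Module ℍᵐᵒᵖ X] [SMulCommClass ℍᵐᵒᵖ ℝ X]
    -- right Banach space: `‖x·s‖ = ‖x‖·|s|`
    (hnorm : ∀ (x : X) (s : ℍ), ‖(op s) • x‖ = ‖x‖ * ‖s‖)
    -- `T` is a closed right linear operator with domain `D`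
    (T : Module.End ℍᵐᵒᵖ X) (D : Submodule ℍᵐᵒᵖ X)
    (hclosed : IsClosed {p : X × X | p.1 ∈ (D : Set X) ∧ T p.1 = p.2})
    -- the ray `S_ω` lies in the S-resolvent set, with pseudo-resolvents `R t = Q_{te^{iω}}(T)⁻¹`
    (ω : ℝ) (hω : ω ∈ Set.Icc (0:ℝ) Real.pi)
    (M : ℝ) (hM : 0 ≤ M)
    (R : ℝ → Module.End ℍᵐᵒᵖ X)
    (hRcont : ∀ t > 0, Continuous (R t))
    (hRdom : ∀ t > 0, ∀ x : X, R t x ∈ domN T (D : Set X) 2)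
    (hQR : ∀ t > 0, ∀ x : X, Qray T ω t (R t x) = x)
    (hRQ : ∀ t > 0, ∀ x ∈ domN T (D : Set X) 2, R t (Qray T ω t x) = x)
    -- the resolvent bounds `‖Q_s⁻¹‖ ≤ M/|s|²` and `‖T Q_s⁻¹‖ ≤ M/|s|` on `S_ω`
    (hR1 : ∀ t > 0, ∀ x : X, ‖R t x‖ ≤ M / t ^ 2 * ‖x‖)
    (hR2 : ∀ t > 0, ∀ x : X, ‖T (R t x)‖ ≤ M / t * ‖x‖)
    (n k m : ℕ) (hnk : n < k) (hkm : k < m) :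
    ∃ C : ℝ, 0 ≤ C ∧ ∀ x ∈ domN T (D : Set X) m,
      ‖x‖ + ‖(T ^ k) x‖
        ≤ C * (‖x‖ + ‖(T ^ n) x‖) ^ (((m : ℝ) - k) / ((m : ℝ) - n))
          * (‖x‖ + ‖(T ^ m) x‖) ^ (((k : ℝ) - n) / ((m : ℝ) - n)) := by
  -- the key estimate `‖Tw‖ ≤ C₀ (t ‖w‖ + ‖T²w‖ / t)`
  have key : ∀ w ∈ domN T (D : Set X) 2, ∀ t > 0,
      ‖T w‖ ≤ (2 + 7 * M) * (t * ‖w‖ + ‖T (T w)‖ / t) := by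
    -- `D` is closed under real scalars and `T` is real-homogeneous on `D` (closed graph)
    have hDsmul : ∀ (r : ℝ) {v : X}, v ∈ D → (r • v ∈ D ∧ T (r • v) = r • T v) := by
      intro r v hv
      have hsub : Set.range ((↑) : ℚ → ℝ)
          ⊆ {r : ℝ | r • v ∈ D ∧ T (r • v) = r • T v} := by
        rintro _ ⟨q, rfl⟩
        refine ⟨?_, map_ratCast_smul T ℝ ℝ q v⟩
        rw [ratCast_smul_eq (R := ℝ) (S := ℍᵐᵒᵖ) q v]
        exact D.smul_mem _ hv
      have hScl : IsClosed {r : ℝ | r • v ∈ D ∧ T (r • v) = r • T v} := by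
        have : {r : ℝ | r • v ∈ D ∧ T (r • v) = r • T v}
            = (fun r : ℝ => (r • v, r • T v)) ⁻¹' {p : X × X | p.1 ∈ (D : Set X) ∧ T p.1 = p.2} := by
          rfl
        rw [this]
        exact hclosed.preimage
          ((continuous_id.smul continuous_const).prodMk (continuous_id.smul continuous_const))
      have hdense : Dense {r : ℝ | r • v ∈ D ∧ T (r • v) = r • T v} :=
        Rat.isDenseEmbedding_coe_real.dense.mono hsub
      have : {r : ℝ | r • v ∈ D ∧ T (r • v) = r • T v} = Set.univ := by
        rw [← hScl.closure_eq]
        exact hdense.closure_eq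
      exact (this ▸ Set.mem_univ r : r ∈ _)
    -- `R t` is real-linear
    have hRsmul : ∀ t > 0, ∀ (r : ℝ) (v : X), R t (r • v) = r • R t v := fun t ht r v =>
      map_real_smul (R t) (hRcont t ht) r v
    -- application of `Qray`
    have hQapp : ∀ (t : ℝ) (v : X),
        Qray T ω t v = T (T v) - (2 * t * Real.cos ω) • T v + t ^ 2 • v := by
      intro t v
      simp [Qray, LinearMap.sub_apply, LinearMap.add_apply, LinearMap.smul_apply,
        Module.End.one_apply, pow_two, Module.End.mul_apply]
    -- identity `T² R t z = z + r T R t z − t² R t z`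
    have hI1 : ∀ t > 0, ∀ z : X,
        T (T (R t z)) = z + (2 * t * Real.cos ω) • T (R t z) - t ^ 2 • R t z := by
      intro t ht z
      have h := hQR t ht z
      rw [hQapp] at h
      calc T (T (R t z))
          = (T (T (R t z)) - (2 * t * Real.cos ω) • T (R t z) + t ^ 2 • R t z)
              + (2 * t * Real.cos ω) • T (R t z) - t ^ 2 • R t z := by abel
        _ = z + (2 * t * Real.cos ω) • T (R t z) - t ^ 2 • R t z := by rw [h]
    -- commutation: `R t (T x) = T (R t x)` for `x ∈ domN 2`
    have hI2 : ∀ t > 0, ∀ x ∈ domN T (D : Set X) 2, R t (T x) = T (R t x) := by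
      intro t ht x hx
      obtain ⟨hxD, hTxD⟩ := (domN_two_iff T (D : Set X) x).mp hx
      obtain ⟨hyD, hTyD⟩ := (domN_two_iff T (D : Set X) (R t x)).mp (hRdom t ht x)
      have hT2y : T (T (R t x)) = x + (2 * t * Real.cos ω) • T (R t x) - t ^ 2 • R t x :=
        hI1 t ht x
      have hT2yD : T (T (R t x)) ∈ D := by
        rw [hT2y]
        exact D.sub_mem (D.add_mem hxD (hDsmul _ hTyD).1) (hDsmul _ hyD).1
      have hTx_eq : T x = Qray T ω t (T (R t x)) := by
        have h1 : T x = T (Qray T ω t (R t x)) := by rw [hQR t ht x]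
        rw [hQapp t (R t x), map_add, map_sub, (hDsmul _ hTyD).2, (hDsmul _ hyD).2] at h1
        rw [hQapp t (T (R t x))]
        exact h1
      rw [hTx_eq]
      exact hRQ t ht (T (R t x)) ((domN_two_iff T (D : Set X) _).mpr ⟨hTyD, hT2yD⟩)
    -- the key estimate
    intro w hw t ht
    obtain ⟨hwD, hTwD⟩ := (domN_two_iff T (D : Set X) w).mp hw
    obtain ⟨hyD, hTyD⟩ := (domN_two_iff T (D : Set X) (R t w)).mp (hRdom t ht w)
    set r : ℝ := 2 * t * Real.cos ω with hrdef
    have e1 : T w = T (R t (T (T w))) - r • T (T (R t w)) + t ^ 2 • T (R t w) := by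
      conv_lhs => rw [← hRQ t ht w hw, hQapp t w]
      rw [map_add, map_sub, hRsmul t ht, hRsmul t ht, map_add, map_sub,
        hI2 t ht w hw, (hDsmul _ hTyD).2, (hDsmul _ hyD).2]
    have hT2y : T (T (R t w)) = w + r • T (R t w) - t ^ 2 • R t w := hI1 t ht w
    have habs_r : |r| ≤ 2 * t := by
      rw [hrdef, abs_mul, abs_mul]
      have h1 : |Real.cos ω| ≤ 1 := Real.abs_cos_le_one ω
      have : |(2:ℝ)| * |t| = 2 * t := by rw [abs_of_pos (by norm_num : (0:ℝ) < 2), abs_of_pos ht]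
      nlinarith [abs_nonneg t, abs_nonneg (2:ℝ), abs_nonneg (Real.cos ω)]
    have hb1 : ‖T (R t (T (T w)))‖ ≤ M / t * ‖T (T w)‖ := hR2 t ht _
    have hb2 : ‖T (T (R t w))‖ ≤ (1 + 3 * M) * ‖w‖ := by
      rw [hT2y]
      have hs2 : ‖r • T (R t w)‖ ≤ 2 * t * (M / t * ‖w‖) := by
        rw [norm_smul, Real.norm_eq_abs]
        exact mul_le_mul habs_r (hR2 t ht w) (norm_nonneg _) (by positivity)
      have hs3 : ‖t ^ 2 • R t w‖ ≤ t ^ 2 * (M / t ^ 2 * ‖w‖) := by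
        rw [norm_smul, Real.norm_eq_abs, abs_of_pos (by positivity : (0:ℝ) < t ^ 2)]
        exact mul_le_mul_of_nonneg_left (hR1 t ht w) (by positivity)
      calc ‖w + r • T (R t w) - t ^ 2 • R t w‖
          ≤ ‖w + r • T (R t w)‖ + ‖t ^ 2 • R t w‖ := norm_sub_le _ _
        _ ≤ ‖w‖ + ‖r • T (R t w)‖ + ‖t ^ 2 • R t w‖ := by
            have := norm_add_le w (r • T (R t w)); linarith
        _ ≤ ‖w‖ + 2 * t * (M / t * ‖w‖) + t ^ 2 * (M / t ^ 2 * ‖w‖) := by linarith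
        _ = (1 + 3 * M) * ‖w‖ := by field_simp; ring
    have hb3 : ‖T (R t w)‖ ≤ M / t * ‖w‖ := hR2 t ht w
    have hs2 : ‖r • T (T (R t w))‖ ≤ 2 * t * ((1 + 3 * M) * ‖w‖) := by
      rw [norm_smul, Real.norm_eq_abs]
      exact mul_le_mul habs_r hb2 (norm_nonneg _) (by positivity)
    have hs3 : ‖t ^ 2 • T (R t w)‖ ≤ t ^ 2 * (M / t * ‖w‖) := by
      rw [norm_smul, Real.norm_eq_abs, abs_of_pos (by positivity : (0:ℝ) < t ^ 2)]
      exact mul_le_mul_of_nonneg_left hb3 (by positivity)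
    have e2 : t ^ 2 * (M / t * ‖w‖) = M * (t * ‖w‖) := by field_simp
    have e3 : M / t * ‖T (T w)‖ = M * (‖T (T w)‖ / t) := by ring
    have hA : (0:ℝ) ≤ ‖T (T w)‖ / t := by positivity
    have htw : (0:ℝ) ≤ t * ‖w‖ := by positivity
    calc ‖T w‖ = ‖T (R t (T (T w))) - r • T (T (R t w)) + t ^ 2 • T (R t w)‖ := by rw [← e1]
      _ ≤ ‖T (R t (T (T w))) - r • T (T (R t w))‖ + ‖t ^ 2 • T (R t w)‖ := norm_add_le _ _
      _ ≤ ‖T (R t (T (T w)))‖ + ‖r • T (T (R t w))‖ + ‖t ^ 2 • T (R t w)‖ := by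
          have := norm_sub_le (T (R t (T (T w)))) (r • T (T (R t w))); linarith
      _ ≤ M / t * ‖T (T w)‖ + 2 * t * ((1 + 3 * M) * ‖w‖) + t ^ 2 * (M / t * ‖w‖) := by
          linarith
      _ ≤ (2 + 7 * M) * (t * ‖w‖ + ‖T (T w)‖ / t) := by
          rw [e2, e3]
          nlinarith [hA, htw, hM, mul_nonneg ht.le (norm_nonneg w)]
  -- optimized form: `‖Tw‖ ≤ 2 C₀ √a √b` whenever `‖w‖ ≤ a`, `‖T²w‖ ≤ b`
  have key2 : ∀ w ∈ domN T (D : Set X) 2, ∀ a b : ℝ, 0 < a → 0 < b →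
      ‖w‖ ≤ a → ‖T (T w)‖ ≤ b →
      ‖T w‖ ≤ 2 * (2 + 7 * M) * (Real.sqrt a * Real.sqrt b) := by
    intro w hw a b ha hb hwa hwb
    set t : ℝ := Real.sqrt b / Real.sqrt a with htdef
    have hsa : (0:ℝ) < Real.sqrt a := Real.sqrt_pos.mpr ha
    have hsb : (0:ℝ) < Real.sqrt b := Real.sqrt_pos.mpr hb
    have ht : 0 < t := div_pos hsb hsa
    have ha' : Real.sqrt a * Real.sqrt a = a := Real.mul_self_sqrt ha.le
    have hb' : Real.sqrt b * Real.sqrt b = b := Real.mul_self_sqrt hb.le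
    have hta : t * a = Real.sqrt a * Real.sqrt b := by
      rw [htdef]
      field_simp
      linear_combination (-1 : ℝ) * ha'
    have htb : b / t = Real.sqrt a * Real.sqrt b := by
      rw [htdef, div_div_eq_mul_div]
      rw [div_eq_iff hsb.ne']
      linear_combination (-1 : ℝ) * Real.sqrt a * hb'
    have h1 := key w hw t ht
    have h2 : t * ‖w‖ + ‖T (T w)‖ / t ≤ t * a + b / t := by
      gcongr
    calc ‖T w‖ ≤ (2 + 7 * M) * (t * ‖w‖ + ‖T (T w)‖ / t) := h1
      _ ≤ (2 + 7 * M) * (t * a + b / t) := by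
          apply mul_le_mul_of_nonneg_left h2 (by linarith)
      _ = 2 * (2 + 7 * M) * (Real.sqrt a * Real.sqrt b) := by rw [hta, htb]; ring
  -- set up the interpolation sequence
  set K : ℝ := 2 * (2 + 7 * M) + 1 with hKdef
  have hK : 1 ≤ K := by rw [hKdef]; linarith
  have hK0 : (0:ℝ) < K := lt_of_lt_of_le one_pos hK
  set N : ℕ := m - n with hNdef
  set i : ℕ := k - n with hidef
  have hN : 0 < N := by omega
  refine ⟨K ^ (N * N), by positivity, ?_⟩
  intro x hx
  by_cases hx0 : x = 0
  · simp only [hx0, map_zero, norm_zero, add_zero]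
    positivity
  have hxpos : 0 < ‖x‖ := norm_pos_iff.mpr hx0
  set b : ℕ → ℝ := fun j => ‖x‖ + ‖(T ^ (n + j)) x‖ with hbdef
  have hbpos : ∀ j, 0 < b j := fun j => by
    have : (0:ℝ) ≤ ‖(T ^ (n + j)) x‖ := norm_nonneg _
    simp only [hbdef]; linarith
  have hpow : ∀ p : ℕ, ((T ^ (p + 1)) x) = T ((T ^ p) x) := by
    intro p
    rw [pow_succ']
    rfl
  have hrec : ∀ j, j + 2 ≤ N → b (j + 1) ≤ K * Real.sqrt (b j * b (j + 2)) := by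
    intro j hj
    set w : X := (T ^ (n + j)) x with hwdef
    have hw2 : w ∈ domN T (D : Set X) 2 := by
      rw [domN_two_iff]
      constructor
      · exact hx (n + j) (by omega)
      · rw [hwdef, ← hpow (n + j)]
        exact hx (n + j + 1) (by omega)
    have hTw : T w = (T ^ (n + (j + 1))) x := by
      rw [hwdef, ← hpow (n + j)]
      norm_num [Nat.add_assoc]
    have hT2w : T (T w) = (T ^ (n + (j + 2))) x := by
      rw [hTw, ← hpow (n + (j + 1))]
      norm_num [Nat.add_assoc]
    have hwa : ‖w‖ ≤ b j := by
      simp only [hbdef, hwdef]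
      linarith [hxpos]
    have hwb : ‖T (T w)‖ ≤ b (j + 2) := by
      rw [hT2w]
      simp only [hbdef]
      linarith [hxpos]
    have hest := key2 w hw2 (b j) (b (j + 2)) (hbpos j) (hbpos (j + 2)) hwa hwb
    have hxx : ‖x‖ ≤ Real.sqrt (b j) * Real.sqrt (b (j + 2)) := by
      have h1 : Real.sqrt ‖x‖ ≤ Real.sqrt (b j) := by
        apply Real.sqrt_le_sqrt
        simp only [hbdef]
        linarith [norm_nonneg ((T ^ (n + j)) x)]
      have h2 : Real.sqrt ‖x‖ ≤ Real.sqrt (b (j + 2)) := by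
        apply Real.sqrt_le_sqrt
        simp only [hbdef]
        linarith [norm_nonneg ((T ^ (n + (j + 2))) x)]
      calc ‖x‖ = Real.sqrt ‖x‖ * Real.sqrt ‖x‖ := (Real.mul_self_sqrt hxpos.le).symm
        _ ≤ Real.sqrt (b j) * Real.sqrt (b (j + 2)) :=
            mul_le_mul h1 h2 (Real.sqrt_nonneg _) (Real.sqrt_nonneg _)
    have : b (j + 1) = ‖x‖ + ‖T w‖ := by rw [hTw]
    rw [this, Real.sqrt_mul (hbpos j).le]
    calc ‖x‖ + ‖T w‖
        ≤ Real.sqrt (b j) * Real.sqrt (b (j + 2))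
          + 2 * (2 + 7 * M) * (Real.sqrt (b j) * Real.sqrt (b (j + 2))) := by
          exact add_le_add hxx hest
      _ = K * (Real.sqrt (b j) * Real.sqrt (b (j + 2))) := by rw [hKdef]; ring
  have hinterp := aux_interp K hK N hN b hbpos hrec i (by omega)
  -- translate back
  have hb0 : b 0 = ‖x‖ + ‖(T ^ n) x‖ := by simp [hbdef]
  have hbN : b N = ‖x‖ + ‖(T ^ m) x‖ := by
    have : n + N = m := by omega
    simp only [hbdef, this]
  have hbi : b i = ‖x‖ + ‖(T ^ k) x‖ := by
    have : n + i = k := by omega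
    simp only [hbdef, this]
  have hNr : (N : ℝ) = (m : ℝ) - n := by
    rw [hNdef, Nat.cast_sub (by omega : n ≤ m)]
  have hir : (i : ℝ) = (k : ℝ) - n := by
    rw [hidef, Nat.cast_sub (by omega : n ≤ k)]
  have hexp1 : ((N : ℝ) - i) / N = ((m : ℝ) - k) / ((m : ℝ) - n) := by
    rw [hNr, hir]; ring_nf
  have hexp2 : (i : ℝ) / N = ((k : ℝ) - n) / ((m : ℝ) - n) := by
    rw [hNr, hir]
  rw [hb0, hbN, hbi, hexp1, hexp2] at hinterp
  exact hinterp
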